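/- Let p be an odd prime, θ = 2π/p, and t > 1 a real number. Define the 3×3 real matrices A_a = [[cos θ, −sin θ, 0],[sin θ, cos θ, 0],[1−cos θ−sin θ, 1+sin θ−cos θ, 1]] and A_$ = [[1,0,0],[0,t,0],[0,1−t,1]], and for l ≥ 0 let v_f(l) = A_$ · (A_a)^l · (1,0,0)ᵀ. Then the acceptance probability |v_f(l)[1]| / (|v_f(l)[1]| + |v_f(l)[2]| + |v_f(l)[3]|) equals 1 when p divides l, and is strictly less than cot(π/p)/t when p does not divide l. (Hence the language MOD_p = {a^{jp} : j ∈ ℕ} is recognized by a 3-state affine finite automaton with negative one-sided error bound cot(π/p)/t.) -/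

import Mathlib

open Matrix Real

/-- The affine operator applied on each input symbol `a` (rotation by `θ`,
augmented to an affine operator). -/
noncomputable def AaM (θ : ℝ) : Matrix (Fin 3) (Fin 3) ℝ :=
  !![Real.cos θ, -Real.sin θ, 0;
     Real.sin θ, Real.cos θ, 0;
     1 - Real.cos θ - Real.sin θ, 1 + Real.sin θ - Real.cos θ, 1]

/-- The affine operator applied on the right end-marker `$`. -/
noncomputable def AdollarM (t : ℝ) : Matrix (Fin 3) (Fin 3) ℝ :=
  !![1, 0, 0; 0, t, 0; 0, 1 - t, 1]

/-- The final affine state on the input `a^l` (with `θ = 2π/p`). -/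
noncomputable def vfM (p : ℕ) (t : ℝ) (l : ℕ) : Fin 3 → ℝ :=
  (AdollarM t * AaM (2 * Real.pi / p) ^ l) *ᵥ ![1, 0, 0]

/-- The acceptance probability (accepting state: the first state). -/
noncomputable def probM (p : ℕ) (t : ℝ) (l : ℕ) : ℝ :=
  |vfM p t l 0| / (|vfM p t l 0| + |vfM p t l 1| + |vfM p t l 2|)

lemma AaM_mul (x y : ℝ) : AaM x * AaM y = AaM (x + y) := by
  ext i j
  fin_cases i <;> fin_cases j <;>
    simp [AaM, Matrix.mul_apply, Fin.sum_univ_three, Real.cos_add, Real.sin_add] <;> ring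

lemma AaM_pow (x : ℝ) (l : ℕ) : AaM x ^ l = AaM (l * x) := by
  induction l with
  | zero =>
      ext i j
      fin_cases i <;> fin_cases j <;>
        simp [AaM, Matrix.one_apply, Matrix.vecHead, Matrix.vecTail]
  | succ n ih =>
      rw [pow_succ, ih, AaM_mul]
      push_cast
      ring_nf

lemma vf_eq (p : ℕ) (t : ℝ) (l : ℕ) :
    vfM p t l =
      ![Real.cos (l * (2 * Real.pi / p)), t * Real.sin (l * (2 * Real.pi / p)),
        1 - Real.cos (l * (2 * Real.pi / p)) - t * Real.sin (l * (2 * Real.pi / p))] := by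
  unfold vfM
  rw [AaM_pow]
  funext i
  fin_cases i <;>
    simp [AaM, AdollarM, Matrix.mulVec, Matrix.mul_apply, dotProduct, Fin.sum_univ_three] <;> ring

lemma key_cos (p l : ℕ) (hp : p.Prime) (hodd : Odd p) (hl : ¬ p ∣ l) :
    Real.cos (2 * ((l : ℝ) * (2 * Real.pi / p))) ≤ Real.cos (2 * Real.pi / p) := by
  have hp3 : 3 ≤ p := by
    have h2 : p ≠ 2 := by rintro rfl; exact absurd hodd (by decide)
    have := hp.two_le
    omega
  have hpR : (3:ℝ) ≤ (p:ℝ) := by exact_mod_cast hp3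
  have hppos : (0:ℝ) < p := by linarith
  have hpne : (p:ℝ) ≠ 0 := ne_of_gt hppos
  set m := (2 * l) % p with hm
  set q := (2 * l) / p with hq
  have hm0 : m ≠ 0 := by
    intro h
    have : p ∣ 2 * l := Nat.dvd_of_mod_eq_zero h
    rcases (Nat.Prime.dvd_mul hp).1 this with h2 | h2
    · have : p = 2 := (Nat.prime_dvd_prime_iff_eq hp Nat.prime_two).1 h2
      omega
    · exact hl h2
  have hmp : m < p := Nat.mod_lt _ (by omega)
  have hnat : 2 * l = p * q + m := (Nat.div_add_mod (2 * l) p).symm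
  have hcast : (2:ℝ) * l = p * q + m := by exact_mod_cast hnat
  have heq : 2 * ((l : ℝ) * (2 * Real.pi / p)) =
      (m : ℝ) * (2 * Real.pi / p) + (q : ℝ) * (2 * Real.pi) := by
    have : 2 * ((l : ℝ) * (2 * Real.pi / p)) = ((2:ℝ) * l) * (2 * Real.pi / p) := by ring
    rw [this, hcast]
    field_simp
    ring
  rw [heq, Real.cos_add_nat_mul_two_pi]
  have hm1 : (1:ℝ) ≤ (m:ℝ) := by
    have : 1 ≤ m := Nat.one_le_iff_ne_zero.2 hm0
    exact_mod_cast this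
  have hmub : (m:ℝ) ≤ (p:ℝ) - 1 := by
    have : m + 1 ≤ p := hmp
    have := (Nat.cast_le (α := ℝ)).2 this
    push_cast at this
    linarith
  have hpi := Real.pi_pos
  set y := (m : ℝ) * (2 * Real.pi / p) with hy
  have hstep : 0 < 2 * Real.pi / p := by positivity
  have hy1 : 2 * Real.pi / p ≤ y := by
    calc 2 * Real.pi / p = 1 * (2 * Real.pi / p) := by ring
    _ ≤ y := by exact mul_le_mul_of_nonneg_right hm1 (le_of_lt hstep)
  have hy2 : y ≤ 2 * Real.pi - 2 * Real.pi / p := by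
    have := mul_le_mul_of_nonneg_right hmub (le_of_lt hstep)
    rw [hy]
    calc (m:ℝ) * (2 * Real.pi / p) ≤ ((p:ℝ) - 1) * (2 * Real.pi / p) := this
    _ = 2 * Real.pi - 2 * Real.pi / p := by field_simp
  rcases le_or_gt y Real.pi with hle | hgt
  · exact Real.cos_le_cos_of_nonneg_of_le_pi (le_of_lt hstep) hle hy1
  · have hcosy : Real.cos y = Real.cos (2 * Real.pi - y) := by
      rw [Real.cos_sub]
      simp [Real.cos_two_pi, Real.sin_two_pi]
    rw [hcosy]
    apply Real.cos_le_cos_of_nonneg_of_le_pi (le_of_lt hstep)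
    · linarith
    · linarith

lemma main_ineq (p : ℕ) (t : ℝ) (l : ℕ) (hp : p.Prime) (hodd : Odd p) (ht : 1 < t)
    (hkey : Real.cos (2 * ((l : ℝ) * (2 * Real.pi / p))) ≤ Real.cos (2 * Real.pi / p))
    (c s : ℝ) (hc : c = Real.cos ((l:ℝ) * (2 * Real.pi / p)))
    (hs : s = Real.sin ((l:ℝ) * (2 * Real.pi / p))) :
    |c| / (|c| + |t * s| + |1 - c - t * s|) < Real.cot (Real.pi / p) / t := by
  have hp3 : 3 ≤ p := by
    have h2 : p ≠ 2 := by rintro rfl; exact absurd hodd (by decide)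
    have := hp.two_le; omega
  have hpR : (3:ℝ) ≤ (p:ℝ) := by exact_mod_cast hp3
  have hpi := Real.pi_pos
  have ht0 : (0:ℝ) < t := by linarith
  set C := Real.cos (Real.pi / p) with hC
  set S := Real.sin (Real.pi / p) with hS
  have hSpos : 0 < S := Real.sin_pos_of_pos_of_lt_pi (by positivity)
    (by rw [div_lt_iff₀ (by linarith : (0:ℝ) < p)]; nlinarith)
  have hCpos : 0 < C := by
    apply Real.cos_pos_of_mem_Ioo
    constructor
    · have : 0 < Real.pi / p := by positivity
      linarith
    · rw [div_lt_iff₀ (by linarith : (0:ℝ) < p)]; nlinarith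
  have hkey' : Real.cos (2 * ((l : ℝ) * (2 * Real.pi / p))) ≤ Real.cos (2 * (Real.pi / p)) := by
    rw [show (2:ℝ) * (Real.pi / p) = 2 * Real.pi / p by ring]; exact hkey
  have hcsq : c ^ 2 ≤ C ^ 2 := by
    have h1 := Real.cos_two_mul ((l:ℝ) * (2 * Real.pi / p))
    have h2 := Real.cos_two_mul (Real.pi / p)
    rw [← hc] at h1; rw [← hC] at h2
    nlinarith [hkey']
  have hssq : S ^ 2 ≤ s ^ 2 := by
    have h1 := Real.sin_sq_add_cos_sq ((l:ℝ) * (2 * Real.pi / p))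
    have h2 := Real.sin_sq_add_cos_sq (Real.pi / p)
    rw [← hc, ← hs] at h1; rw [← hC, ← hS] at h2
    nlinarith [hcsq]
  have habsc : |c| ≤ C := by nlinarith [sq_abs c, abs_nonneg c]
  have habss : S ≤ |s| := by nlinarith [sq_abs s, abs_nonneg s]
  have hts : |t * s| = t * |s| := by rw [abs_mul, abs_of_pos ht0]
  have hts0 : 0 < t * |s| :=
    lt_of_lt_of_le (mul_pos ht0 hSpos) (mul_le_mul_of_nonneg_left habss ht0.le)
  have hcot : Real.cot (Real.pi / p) / t = C / (t * S) := by
    rw [Real.cot_eq_cos_div_sin, ← hC, ← hS, div_div]; ring_nf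
  rw [hcot]
  rcases eq_or_lt_of_le (abs_nonneg c) with h0 | h0
  · rw [← h0, zero_div]
    positivity
  · have hDpos : 0 < |c| + |t * s| + |1 - c - t * s| := by
      rw [hts]; have := abs_nonneg (1 - c - t * s); linarith
    have hDge : |c| + t * |s| ≤ |c| + |t * s| + |1 - c - t * s| := by
      rw [hts]; have := abs_nonneg (1 - c - t * s); linarith
    have step1 : |c| / (|c| + |t * s| + |1 - c - t * s|) ≤ |c| / (|c| + t * |s|) :=
      div_le_div_of_nonneg_left (abs_nonneg c) (by linarith) hDge
    have step2 : |c| / (|c| + t * |s|) < |c| / (t * |s|) :=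
      div_lt_div_of_pos_left h0 hts0 (by linarith)
    have step3 : |c| / (t * |s|) ≤ C / (t * S) :=
      div_le_div₀ hCpos.le habsc (by positivity) (mul_le_mul_of_nonneg_left habss ht0.le)
    linarith

/-- The acceptance probability equals `1` when `p ∣ l`, and is strictly less than
`cot(π/p)/t` when `p ∤ l`: the language `MOD_p = {a^{jp} : j ∈ ℕ}` is recognized by a
3-state AfA with negative one-sided error bound `cot(π/p)/t`. -/
theorem mod_recognized_with_one_sided_error (p : ℕ) (hp : p.Prime) (hodd : Odd p)
    (t : ℝ) (ht : 1 < t) (l : ℕ) :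
    (p ∣ l → probM p t l = 1) ∧
    (¬ p ∣ l → probM p t l < Real.cot (Real.pi / p) / t) := by
  have hppos : 0 < p := hp.pos
  have hpne : (p:ℝ) ≠ 0 := by exact_mod_cast hppos.ne'
  have hprob : probM p t l =
      |Real.cos ((l:ℝ) * (2 * Real.pi / p))| /
        (|Real.cos ((l:ℝ) * (2 * Real.pi / p))| +
          |t * Real.sin ((l:ℝ) * (2 * Real.pi / p))| +
          |1 - Real.cos ((l:ℝ) * (2 * Real.pi / p)) -
            t * Real.sin ((l:ℝ) * (2 * Real.pi / p))|) := by
    unfold probM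
    rw [vf_eq]
    simp
  constructor
  · rintro ⟨j, rfl⟩
    have hα : ((p * j : ℕ) : ℝ) * (2 * Real.pi / p) = (j : ℝ) * (2 * Real.pi) := by
      push_cast
      field_simp
    have hcos : Real.cos (((p * j : ℕ) : ℝ) * (2 * Real.pi / p)) = 1 := by
      rw [hα]; exact Real.cos_nat_mul_two_pi j
    have hsin : Real.sin (((p * j : ℕ) : ℝ) * (2 * Real.pi / p)) = 0 := by
      rw [hα, show (j : ℝ) * (2 * Real.pi) = ((2 * j : ℕ) : ℝ) * Real.pi by push_cast; ring]
      exact Real.sin_nat_mul_pi (2 * j)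
    rw [hprob, hcos, hsin]
    norm_num
  · intro hl
    rw [hprob]
    exact main_ineq p t l hp hodd ht (key_cos p l hp hodd hl) _ _ rfl rfl
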